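/- With v and w related as above (w coming from the inverse square root series), the inversion formula v_n = Σ_{k=1}^n (-1)^{k+1}(k+1) P^{(k)}_n(w) holds for all n ≥ 1. -/

import Mathlib

/-- The symmetric polynomial
`P_n^{(k)}(x) = Σ_{j_1+···+j_k = n, j_i ≥ 1} x_{j_1}···x_{j_k}`. -/
noncomputable def Pp {A : Type*} [Ring A] (x : ℕ → A) (k n : ℕ) : A :=
  ∑ j : Fin k → Fin (n + 1),
    if (∀ i, 1 ≤ (j i : ℕ)) ∧ (∑ i, (j i : ℕ)) = n then
      (List.ofFn fun i => x ((j i : ℕ))).prod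
    else 0

/-- `w_n = Σ_{k=1}^n ((2k-1)!!/(k! 2^k)) P^{(k)}_n(v)`, the coefficients of the
binomial series `(1 - Σ y^n v_n)^{-1/2}`. -/
noncomputable def ww {A : Type*} [CommRing A] [Algebra ℚ A] (v : ℕ → A) (n : ℕ) : A :=
  ∑ k ∈ Finset.Icc 1 n,
    ((Nat.doubleFactorial (2 * k - 1) : ℚ) / (Nat.factorial k * 2 ^ k)) • Pp v k n

open PowerSeries Finset

section QPart

/-- The coefficients of `(1-t)^{-1/2}`. -/
noncomputable def aa (k : ℕ) : ℚ :=
  (Nat.doubleFactorial (2 * k - 1) : ℚ) / (Nat.factorial k * 2 ^ k)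

lemma aa_zero : aa 0 = 1 := by
  simp [aa, Nat.doubleFactorial]

lemma aa_rec (k : ℕ) : (2 * (k + 1) : ℚ) * aa (k + 1) = (2 * k + 1) * aa k := by
  rcases k with _ | m
  · norm_num [aa, Nat.doubleFactorial, Nat.factorial]
  · have hfac : (Nat.factorial (m + 1) : ℚ) ≠ 0 := Nat.cast_ne_zero.mpr (Nat.factorial_ne_zero _)
    rw [aa, aa]
    simp only [show 2 * (m + 1 + 1) - 1 = (2 * m + 1) + 2 from by omega,
      show 2 * (m + 1) - 1 = 2 * m + 1 from by omega,
      Nat.doubleFactorial_add_two, Nat.factorial_succ (m + 1)]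
    field_simp
    push_cast
    ring

/-- `(1-t)^{-1/2}` as a formal power series over `ℚ`. -/
noncomputable def ff : ℚ⟦X⟧ := PowerSeries.mk aa

lemma ff_ODE : (1 - X) * (d⁄dX ℚ ff) * 2 = ff := by
  have hsplit : (1 - X) * (d⁄dX ℚ ff) * 2
      = (d⁄dX ℚ ff - (d⁄dX ℚ ff) * X) + (d⁄dX ℚ ff - (d⁄dX ℚ ff) * X) := by ring
  ext n
  have hc : ∀ m : ℕ, coeff m (d⁄dX ℚ ff) = aa (m + 1) * (m + 1) := fun m => by
    rw [coeff_derivative, ff, coeff_mk]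
  have hrhs : coeff n ff = aa n := by rw [ff, coeff_mk]
  rw [hsplit, map_add, map_sub, hrhs]
  rcases n with _ | m
  · rw [PowerSeries.coeff_zero_mul_X, hc 0]
    have := aa_rec 0
    push_cast at this ⊢
    linarith
  · rw [PowerSeries.coeff_succ_mul_X, hc m, hc (m + 1)]
    have h1 := aa_rec (m + 1)
    push_cast at h1 ⊢
    linarith

lemma ff_sq : (1 - X) * (ff * ff) = 1 := by
  apply PowerSeries.derivative.ext
  · have hl : d⁄dX ℚ ((1 - X) * (ff * ff))
        = ((1 - X : ℚ⟦X⟧)) • (d⁄dX ℚ (ff * ff)) + (ff * ff) • (d⁄dX ℚ (1 - X : ℚ⟦X⟧)) :=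
      Derivation.leibniz _ _ _
    have hff : d⁄dX ℚ (ff * ff) = ff • (d⁄dX ℚ ff) + ff • (d⁄dX ℚ ff) :=
      Derivation.leibniz _ _ _
    have hX : d⁄dX ℚ (1 - X : ℚ⟦X⟧) = -1 := by
      rw [map_sub]; simp
    rw [hl, hff, hX, smul_eq_mul, smul_eq_mul, smul_eq_mul]
    have : (1 - X) * (ff * d⁄dX ℚ ff + ff * d⁄dX ℚ ff) + ff * ff * (-1)
        = ff * ((1 - X) * (d⁄dX ℚ ff) * 2) - ff * ff := by ring
    rw [this, ff_ODE]
    simp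
  · rw [map_mul, map_mul, map_sub]
    simp [ff, constantCoeff_mk, aa_zero]

lemma aa_conv (k : ℕ) : ∑ pq ∈ Finset.HasAntidiagonal.antidiagonal k, aa pq.1 * aa pq.2 = 1 := by
  have key : ∀ m : ℕ, coeff m ((1 - X) * (ff * ff)) = coeff m 1 := fun m => by
    rw [ff_sq]
  have hcoe : ∀ m : ℕ, coeff m (ff * ff) = ∑ pq ∈ Finset.HasAntidiagonal.antidiagonal m, aa pq.1 * aa pq.2 :=
    fun m => by
      rw [coeff_mul]
      exact Finset.sum_congr rfl fun pq _ => by rw [ff, coeff_mk, coeff_mk]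
  induction k with
  | zero =>
    have := key 0
    rw [sub_mul, one_mul, map_sub] at this
    rw [show ((X : ℚ⟦X⟧) * (ff * ff)) = (ff * ff) * X by ring, PowerSeries.coeff_zero_mul_X]
      at this
    rw [← hcoe 0]
    simpa using this
  | succ m ih =>
    have := key (m + 1)
    rw [sub_mul, one_mul, map_sub,
      show ((X : ℚ⟦X⟧) * (ff * ff)) = (ff * ff) * X by ring,
      PowerSeries.coeff_succ_mul_X, hcoe, hcoe, ih] at this
    rw [PowerSeries.coeff_one, if_neg (Nat.succ_ne_zero m)] at this
    linarith

end QPart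

section PpPart

variable {A : Type*} [CommRing A]

lemma Pp_eq_filter (x : ℕ → A) (k n : ℕ) :
    Pp x k n = ∑ j ∈ (univ : Finset (Fin k → Fin (n+1))).filter
        (fun j => ∑ i, (j i : ℕ) = n), ∏ i, (if (j i : ℕ) = 0 then 0 else x (j i)) := by
  rw [Finset.sum_filter, Pp]
  refine Finset.sum_congr rfl fun j _ => ?_
  by_cases h2 : (∑ i, (j i : ℕ)) = n
  · by_cases h1 : ∀ i, 1 ≤ (j i : ℕ)
    · rw [if_pos ⟨h1, h2⟩, if_pos h2, List.prod_ofFn]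
      exact Finset.prod_congr rfl fun i _ => by rw [if_neg (by have := h1 i; omega)]
    · rw [if_neg (by tauto), if_pos h2]
      push_neg at h1
      obtain ⟨i, hi⟩ := h1
      exact (Finset.prod_eq_zero (Finset.mem_univ i) (by rw [if_pos (by omega)])).symm
  · rw [if_neg (by tauto), if_neg h2]

lemma Pp_eq_zero (x : ℕ → A) {k n : ℕ} (h : n < k) : Pp x k n = 0 := by
  rw [Pp]
  refine Finset.sum_eq_zero fun j _ => ?_
  rw [if_neg]
  rintro ⟨h1, h2⟩
  have : k ≤ ∑ i, (j i : ℕ) := by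
    calc k = ∑ _i : Fin k, 1 := by simp
    _ ≤ _ := Finset.sum_le_sum fun i _ => h1 i
  omega

lemma Pp_zero (x : ℕ → A) (n : ℕ) : Pp x 0 n = if n = 0 then 1 else 0 := by
  rw [Pp]
  simp [Finset.univ_unique, eq_comm]

lemma Pp_zero_right (x : ℕ → A) (k : ℕ) : Pp x k 0 = if k = 0 then 1 else 0 := by
  rcases Nat.eq_zero_or_pos k with rfl | hk
  · simp [Pp_zero]
  · rw [Pp_eq_zero x hk, if_neg (by omega)]

lemma coeff_mk_pow (x : ℕ → A) (k n : ℕ) :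
    (coeff n) ((PowerSeries.mk fun m => if m = 0 then 0 else x m) ^ k) = Pp x k n := by
  set V := PowerSeries.mk fun m => if m = 0 then (0:A) else x m with hV
  have hVk : V ^ k = ∏ _i ∈ (univ : Finset (Fin k)), V := by
    rw [Finset.prod_const, Finset.card_univ, Fintype.card_fin]
  rw [hVk, coeff_prod (fun _ : Fin k => V) n univ, Pp_eq_filter]
  refine (Finset.sum_nbij'
    (fun l => fun i : Fin k => (⟨min (l i) n, by omega⟩ : Fin (n+1)))
    (fun j => Finsupp.equivFunOnFinite.symm (fun i => (j i : ℕ)))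
    ?_ ?_ ?_ ?_ ?_)
  · -- forward: l ∈ finsuppAntidiag → j ∈ filter
    intro l hl
    rw [Finset.mem_finsuppAntidiag] at hl
    refine Finset.mem_filter.mpr ⟨Finset.mem_univ _, ?_⟩
    have hle : ∀ i, l i ≤ n := by
      intro i
      calc l i ≤ ∑ i' : Fin k, l i' := Finset.single_le_sum (fun _ _ => Nat.zero_le _) (mem_univ i)
      _ = n := hl.1
    simp only [min_eq_left (hle _)]
    exact hl.1
  · -- backward mem
    intro j hj
    rw [Finset.mem_finsuppAntidiag]
    refine ⟨?_, fun i _ => Finset.mem_univ i⟩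
    simpa using (Finset.mem_filter.mp hj).2
  · -- left inverse on finsuppAntidiag
    intro l hl
    rw [Finset.mem_finsuppAntidiag] at hl
    have hle : ∀ i, l i ≤ n := by
      intro i
      calc l i ≤ ∑ i' : Fin k, l i' := Finset.single_le_sum (fun _ _ => Nat.zero_le _) (mem_univ i)
      _ = n := hl.1
    ext i
    simp [min_eq_left (hle i)]
  · -- right inverse
    intro j hj
    have hle : ∀ i, (j i : ℕ) ≤ n := fun i => by omega
    funext i
    ext
    simp [min_eq_left (hle i)]
  · -- terms agree
    intro l hl
    rw [Finset.mem_finsuppAntidiag] at hl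
    have hle : ∀ i, l i ≤ n := by
      intro i
      calc l i ≤ ∑ i' : Fin k, l i' := Finset.single_le_sum (fun _ _ => Nat.zero_le _) (mem_univ i)
      _ = n := hl.1
    refine Finset.prod_congr rfl fun i _ => ?_
    rw [hV, coeff_mk]
    simp [min_eq_left (hle i)]

lemma convPp (x : ℕ → A) (p q m : ℕ) :
    ∑ ij ∈ Finset.HasAntidiagonal.antidiagonal m, Pp x p ij.1 * Pp x q ij.2 = Pp x (p + q) m := by
  set V := PowerSeries.mk fun m => if m = 0 then (0:A) else x m with hV
  have h1 : ∀ ij ∈ Finset.HasAntidiagonal.antidiagonal m,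
      Pp x p ij.1 * Pp x q ij.2 = coeff ij.1 (V ^ p) * coeff ij.2 (V ^ q) :=
    fun ij _ => by rw [hV, coeff_mk_pow, coeff_mk_pow]
  rw [Finset.sum_congr rfl h1, ← coeff_mul, ← pow_add, hV, coeff_mk_pow]

end PpPart

section Regroup

lemma regroup {M : Type*} [AddCommMonoid M] (N : ℕ) (F : ℕ → ℕ → M)
    (hf : ∀ p q, N ≤ p + q → F p q = 0) :
    ∑ p ∈ range N, ∑ q ∈ range N, F p q
      = ∑ k ∈ range N, ∑ pq ∈ Finset.HasAntidiagonal.antidiagonal k, F pq.1 pq.2 := by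
  rw [← Finset.sum_product']
  have hdisj : (↑(range N) : Set ℕ).PairwiseDisjoint (fun k => Finset.HasAntidiagonal.antidiagonal k) := by
    intro x _ y _ hxy
    refine Finset.disjoint_left.mpr fun pq h1 h2 => hxy ?_
    rw [Finset.HasAntidiagonal.mem_antidiagonal] at h1 h2
    omega
  rw [← Finset.sum_biUnion hdisj]
  refine (Finset.sum_subset ?_ ?_).symm
  · intro pq hpq
    rw [Finset.mem_biUnion] at hpq
    obtain ⟨k, hk, hpq⟩ := hpq
    rw [Finset.HasAntidiagonal.mem_antidiagonal] at hpq
    rw [Finset.mem_range] at hk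
    rw [Finset.mem_product, Finset.mem_range, Finset.mem_range]
    omega
  · intro pq _ hpq
    refine hf pq.1 pq.2 ?_
    by_contra h
    push_neg at h
    exact hpq (Finset.mem_biUnion.mpr ⟨pq.1 + pq.2, Finset.mem_range.mpr h,
      Finset.HasAntidiagonal.mem_antidiagonal.mpr rfl⟩)

lemma sum_Icc_to_range {M : Type*} [AddCommMonoid M] {F : ℕ → M} {j n : ℕ} (hjn : j ≤ n)
    (h0 : F 0 = 0) (hbig : ∀ k, j < k → F k = 0) :
    ∑ k ∈ Finset.Icc 1 j, F k = ∑ k ∈ range (n + 1), F k := by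
  refine Finset.sum_subset ?_ ?_
  · intro k hk
    rw [Finset.mem_Icc] at hk
    rw [Finset.mem_range]
    omega
  · intro k hk1 hk2
    rw [Finset.mem_range] at hk1
    rw [Finset.mem_Icc] at hk2
    rcases Nat.eq_zero_or_pos k with rfl | hkpos
    · exact h0
    · exact hbig k (by omega)

end Regroup

section Main

variable {A : Type*} [CommRing A] [Algebra ℚ A] (v : ℕ → A)

/-- `(-1)^k (k+1)`, the coefficients of `(1+t)^{-2}`. -/
noncomputable def gg (k : ℕ) : ℚ := (-1) ^ k * (k + 1)


lemma ext_T {j n : ℕ} (hjn : j ≤ n) :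
    coeff j (1 + (PowerSeries.mk fun m => if m = 0 then (0:A) else ww v m)) = ∑ k ∈ range (n + 1), aa k • Pp v k j := by
  rw [map_add, coeff_mk]
  rcases j with _ | j'
  · rw [coeff_one, if_pos rfl, if_pos rfl, add_zero]
    rw [Finset.sum_eq_single 0]
    · rw [Pp_zero_right, if_pos rfl, aa_zero, one_smul]
    · intro k _ hk
      rw [Pp_zero_right, if_neg hk, smul_zero]
    · intro h
      exact absurd (Finset.mem_range.mpr (by omega)) h
  · rw [coeff_one, if_neg (Nat.succ_ne_zero j'), if_neg (Nat.succ_ne_zero j'), zero_add]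
    have hww : ww v (j' + 1) = ∑ k ∈ Finset.Icc 1 (j' + 1), aa k • Pp v k (j' + 1) := rfl
    rw [hww]
    refine sum_Icc_to_range hjn ?_ ?_
    · rw [Pp_zero, if_neg (Nat.succ_ne_zero j'), smul_zero]
    · intro k hk
      rw [Pp_eq_zero v hk, smul_zero]

lemma Hsq (n : ℕ) :
    coeff n ((1 + (PowerSeries.mk fun m => if m = 0 then (0:A) else ww v m)) * (1 + (PowerSeries.mk fun m => if m = 0 then (0:A) else ww v m))) = ∑ k ∈ range (n + 1), Pp v k n := by
  rw [coeff_mul]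
  have h1 : ∀ ij ∈ Finset.HasAntidiagonal.antidiagonal n, (coeff ij.1 (1 + (PowerSeries.mk fun m => if m = 0 then (0:A) else ww v m))) * (coeff ij.2 (1 + (PowerSeries.mk fun m => if m = 0 then (0:A) else ww v m)))
      = ∑ p ∈ range (n+1), ∑ q ∈ range (n+1), (aa p * aa q) • (Pp v p ij.1 * Pp v q ij.2) := by
    intro ij hij
    have hmem := Finset.HasAntidiagonal.mem_antidiagonal.mp hij
    rw [ext_T v (show ij.1 ≤ n by omega), ext_T v (show ij.2 ≤ n by omega),
      Finset.sum_mul_sum]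
    exact Finset.sum_congr rfl fun p _ => Finset.sum_congr rfl fun q _ =>
      smul_mul_smul_comm _ _ _ _
  rw [Finset.sum_congr rfl h1, Finset.sum_comm]
  have h2 : ∀ p ∈ range (n+1),
      (∑ ij ∈ Finset.HasAntidiagonal.antidiagonal n, ∑ q ∈ range (n+1),
        (aa p * aa q) • (Pp v p ij.1 * Pp v q ij.2))
      = ∑ q ∈ range (n+1), (aa p * aa q) • Pp v (p + q) n := by
    intro p _
    rw [Finset.sum_comm]
    refine Finset.sum_congr rfl fun q _ => ?_
    rw [← Finset.smul_sum, convPp]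
  rw [Finset.sum_congr rfl h2, regroup (n+1) _ (fun p q h => by
    rw [Pp_eq_zero v (show n < p + q by omega), smul_zero])]
  refine Finset.sum_congr rfl fun k hk => ?_
  have h3 : ∀ pq ∈ Finset.HasAntidiagonal.antidiagonal k,
      (aa pq.1 * aa pq.2) • Pp v (pq.1 + pq.2) n = (aa pq.1 * aa pq.2) • Pp v k n := by
    intro pq hpq
    rw [Finset.HasAntidiagonal.mem_antidiagonal.mp hpq]
  rw [Finset.sum_congr rfl h3, ← Finset.sum_smul, aa_conv, one_smul]

lemma C1 : (1 - (PowerSeries.mk fun m => if m = 0 then (0:A) else v m)) * ((1 + (PowerSeries.mk fun m => if m = 0 then (0:A) else ww v m)) * (1 + (PowerSeries.mk fun m => if m = 0 then (0:A) else ww v m))) = 1 := by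
  ext n
  have hexp : (1 - (PowerSeries.mk fun m => if m = 0 then (0:A) else v m)) * ((1 + (PowerSeries.mk fun m => if m = 0 then (0:A) else ww v m)) * (1 + (PowerSeries.mk fun m => if m = 0 then (0:A) else ww v m)))
      = (1 + (PowerSeries.mk fun m => if m = 0 then (0:A) else ww v m)) * (1 + (PowerSeries.mk fun m => if m = 0 then (0:A) else ww v m)) - (PowerSeries.mk fun m => if m = 0 then (0:A) else v m) * ((1 + (PowerSeries.mk fun m => if m = 0 then (0:A) else ww v m)) * (1 + (PowerSeries.mk fun m => if m = 0 then (0:A) else ww v m))) := by ring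
  rw [hexp, map_sub, Hsq, coeff_mul]
  have h1 : ∀ ij ∈ Finset.HasAntidiagonal.antidiagonal n,
      coeff ij.1 (PowerSeries.mk fun m => if m = 0 then (0:A) else v m) * coeff ij.2 ((1 + (PowerSeries.mk fun m => if m = 0 then (0:A) else ww v m)) * (1 + (PowerSeries.mk fun m => if m = 0 then (0:A) else ww v m)))
      = ∑ k ∈ range (n + 1), coeff ij.1 (PowerSeries.mk fun m => if m = 0 then (0:A) else v m) * Pp v k ij.2 := by
    intro ij hij
    have hmem := Finset.HasAntidiagonal.mem_antidiagonal.mp hij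
    rw [Hsq, Finset.mul_sum]
    refine (Finset.sum_subset (Finset.range_subset_range.mpr (by omega)) ?_)
    intro k hk1 hk2
    rw [Finset.mem_range] at hk1 hk2
    rw [Pp_eq_zero v (show ij.2 < k by omega), mul_zero]
  rw [Finset.sum_congr rfl h1, Finset.sum_comm]
  have h2 : ∀ k ∈ range (n + 1),
      (∑ ij ∈ Finset.HasAntidiagonal.antidiagonal n, coeff ij.1 (PowerSeries.mk fun m => if m = 0 then (0:A) else v m) * Pp v k ij.2)
      = Pp v (1 + k) n := by
    intro k _
    have h3 : ∀ ij ∈ Finset.HasAntidiagonal.antidiagonal n,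
        coeff ij.1 (PowerSeries.mk fun m => if m = 0 then (0:A) else v m) * Pp v k ij.2 = coeff ij.1 ((PowerSeries.mk fun m => if m = 0 then (0:A) else v m) ^ 1) * coeff ij.2 ((PowerSeries.mk fun m => if m = 0 then (0:A) else v m) ^ k) := by
      intro ij _
      rw [pow_one, coeff_mk_pow]
    rw [Finset.sum_congr rfl h3, ← coeff_mul, ← pow_add, coeff_mk_pow]
  rw [Finset.sum_congr rfl h2]
  have h4 : ∀ k ∈ range (n + 1), Pp v (1 + k) n = Pp v (k + 1) n := by
    intro k _; rw [add_comm]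
  rw [Finset.sum_congr rfl h4, ← Finset.sum_sub_distrib,
    Finset.sum_range_sub' (fun k => Pp v k n) (n + 1),
    Pp_eq_zero v (Nat.lt_succ_self n), sub_zero, Pp_zero, coeff_one]

lemma coeff_W_mul {Y : A⟦X⟧} {c : ℕ → ℚ} {h : ℕ → ℕ} {n : ℕ} (x : ℕ → A)
    (hY : ∀ j ≤ n, coeff j Y = ∑ k ∈ range (n + 1), c k • Pp x (h k) j) {j : ℕ} (hj : j ≤ n) :
    coeff j ((PowerSeries.mk fun m => if m = 0 then (0:A) else x m) * Y)
      = ∑ k ∈ range (n + 1), c k • Pp x (h k + 1) j := by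
  set W' := PowerSeries.mk fun m => if m = 0 then (0:A) else x m with hW
  rw [coeff_mul]
  have h1 : ∀ ij ∈ Finset.HasAntidiagonal.antidiagonal j, coeff ij.1 W' * coeff ij.2 Y
      = ∑ k ∈ range (n + 1), c k • (coeff ij.1 W' * Pp x (h k) ij.2) := by
    intro ij hij
    have hmem := Finset.HasAntidiagonal.mem_antidiagonal.mp hij
    rw [hY ij.2 (by omega), Finset.mul_sum]
    exact Finset.sum_congr rfl fun k _ => mul_smul_comm _ _ _
  rw [Finset.sum_congr rfl h1, Finset.sum_comm]
  refine Finset.sum_congr rfl fun k _ => ?_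
  rw [← Finset.smul_sum]
  congr 1
  have h3 : ∀ ij ∈ Finset.HasAntidiagonal.antidiagonal j,
      coeff ij.1 W' * Pp x (h k) ij.2 = coeff ij.1 (W' ^ 1) * coeff ij.2 (W' ^ (h k)) := by
    intro ij _
    rw [pow_one, hW, coeff_mk_pow]
  rw [Finset.sum_congr rfl h3, ← coeff_mul, ← pow_add, hW, coeff_mk_pow, add_comm 1 (h k)]

lemma C2 : ((1 + (PowerSeries.mk fun m => if m = 0 then (0:A) else ww v m)) * (1 + (PowerSeries.mk fun m => if m = 0 then (0:A) else ww v m))) * (PowerSeries.mk fun m => ∑ k ∈ range (m + 1), gg k • Pp (ww v) k m) = 1 := by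
  ext n
  set w : ℕ → A := ww v with hw
  have hG : ∀ j ≤ n, coeff j (PowerSeries.mk fun m => ∑ k ∈ range (m + 1), gg k • Pp (ww v) k m) = ∑ k ∈ range (n + 1), gg k • Pp w k j := by
    intro j hj
    rw [coeff_mk]
    refine Finset.sum_subset (Finset.range_subset_range.mpr (by omega)) ?_
    intro k hk1 hk2
    rw [Finset.mem_range] at hk1 hk2
    rw [Pp_eq_zero w (show j < k by omega), smul_zero]
  have hWG : ∀ j ≤ n, coeff j ((PowerSeries.mk fun m => if m = 0 then (0:A) else ww v m) * (PowerSeries.mk fun m => ∑ k ∈ range (m + 1), gg k • Pp (ww v) k m))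
      = ∑ k ∈ range (n + 1), gg k • Pp w (k + 1) j :=
    fun j hj => coeff_W_mul w hG hj
  have hWWG : coeff n ((PowerSeries.mk fun m => if m = 0 then (0:A) else ww v m) * ((PowerSeries.mk fun m => if m = 0 then (0:A) else ww v m) * (PowerSeries.mk fun m => ∑ k ∈ range (m + 1), gg k • Pp (ww v) k m)))
      = ∑ k ∈ range (n + 1), gg k • Pp w (k + 2) n :=
    coeff_W_mul w (fun j hj => hWG j hj) le_rfl
  have hsplit : ((1 + (PowerSeries.mk fun m => if m = 0 then (0:A) else ww v m)) * (1 + (PowerSeries.mk fun m => if m = 0 then (0:A) else ww v m))) * (PowerSeries.mk fun m => ∑ k ∈ range (m + 1), gg k • Pp (ww v) k m)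
      = (PowerSeries.mk fun m => ∑ k ∈ range (m + 1), gg k • Pp (ww v) k m) + ((PowerSeries.mk fun m => if m = 0 then (0:A) else ww v m) * (PowerSeries.mk fun m => ∑ k ∈ range (m + 1), gg k • Pp (ww v) k m) + (PowerSeries.mk fun m => if m = 0 then (0:A) else ww v m) * (PowerSeries.mk fun m => ∑ k ∈ range (m + 1), gg k • Pp (ww v) k m)) + (PowerSeries.mk fun m => if m = 0 then (0:A) else ww v m) * ((PowerSeries.mk fun m => if m = 0 then (0:A) else ww v m) * (PowerSeries.mk fun m => ∑ k ∈ range (m + 1), gg k • Pp (ww v) k m)) := by ring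
  rw [hsplit, map_add, map_add, map_add, hG n le_rfl, hWG n le_rfl, hWWG]
  set Φ : ℕ → A := fun m => gg m • Pp w m n + ((-1 : ℚ) ^ m * m) • Pp w (m + 1) n with hΦ
  have htel : ∀ k, gg k • Pp w k n + (gg k • Pp w (k + 1) n + gg k • Pp w (k + 1) n)
        + gg k • Pp w (k + 2) n
      = Φ k - Φ (k + 1) := by
    intro k
    simp only [hΦ, gg, show k + 1 + 1 = k + 2 by omega]
    push_cast
    module
  rw [← Finset.sum_add_distrib, ← Finset.sum_add_distrib, ← Finset.sum_add_distrib,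
    Finset.sum_congr rfl (fun k _ => htel k), Finset.sum_range_sub' Φ (n + 1)]
  have hΦ0 : Φ 0 = Pp w 0 n := by
    simp [hΦ, gg]
  have hΦn : Φ (n + 1) = 0 := by
    rw [hΦ]
    simp only
    rw [Pp_eq_zero w (Nat.lt_succ_self n), Pp_eq_zero w (by omega), smul_zero, smul_zero,
      add_zero]
  rw [hΦ0, hΦn, sub_zero, Pp_zero, coeff_one]

end Main

/-- Inversion formula: `v_n = Σ_{k=1}^n (-1)^{k+1} (k+1) P^{(k)}_n(w)` for `n ≥ 1`. -/
theorem vv_from_ww {A : Type*} [CommRing A] [Algebra ℚ A] (v : ℕ → A)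
    (n : ℕ) (hn : 1 ≤ n) :
    v n = ∑ k ∈ Finset.Icc 1 n,
      (((-1 : ℤ) ^ (k + 1) * (k + 1)) • Pp (ww v) k n) := by
  have hG : (PowerSeries.mk fun m => ∑ k ∈ range (m + 1), gg k • Pp (ww v) k m)
      = 1 - (PowerSeries.mk fun m => if m = 0 then (0:A) else v m) := by
    calc (PowerSeries.mk fun m => ∑ k ∈ range (m + 1), gg k • Pp (ww v) k m)
        = 1 * (PowerSeries.mk fun m => ∑ k ∈ range (m + 1), gg k • Pp (ww v) k m) :=
          (one_mul _).symm
      _ = ((1 - (PowerSeries.mk fun m => if m = 0 then (0:A) else v m)) *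
            ((1 + (PowerSeries.mk fun m => if m = 0 then (0:A) else ww v m)) *
              (1 + (PowerSeries.mk fun m => if m = 0 then (0:A) else ww v m)))) *
            (PowerSeries.mk fun m => ∑ k ∈ range (m + 1), gg k • Pp (ww v) k m) := by
          rw [C1 v]
      _ = (1 - (PowerSeries.mk fun m => if m = 0 then (0:A) else v m)) *
            (((1 + (PowerSeries.mk fun m => if m = 0 then (0:A) else ww v m)) *
              (1 + (PowerSeries.mk fun m => if m = 0 then (0:A) else ww v m))) *
            (PowerSeries.mk fun m => ∑ k ∈ range (m + 1), gg k • Pp (ww v) k m)) := by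
          ring
      _ = (1 - (PowerSeries.mk fun m => if m = 0 then (0:A) else v m)) * 1 := by
          rw [C2 v]
      _ = 1 - (PowerSeries.mk fun m => if m = 0 then (0:A) else v m) := mul_one _
  have hn' := congrArg (coeff (R := A) n) hG
  rw [coeff_mk, map_sub, coeff_one, if_neg (by omega), coeff_mk, if_neg (by omega),
    zero_sub] at hn'
  have hsum : ∑ k ∈ Finset.Icc 1 n, gg k • Pp (ww v) k n
      = ∑ k ∈ range (n + 1), gg k • Pp (ww v) k n := by
    refine sum_Icc_to_range le_rfl ?_ ?_
    · rw [Pp_zero, if_neg (by omega), smul_zero]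
    · intro k hk
      rw [Pp_eq_zero _ hk, smul_zero]
  have hv : v n = ∑ k ∈ Finset.Icc 1 n, -(gg k • Pp (ww v) k n) := by
    rw [Finset.sum_neg_distrib, hsum, hn', neg_neg]
  rw [hv]
  refine Finset.sum_congr rfl fun k _ => ?_
  rw [← Int.cast_smul_eq_zsmul ℚ, ← neg_smul]
  congr 1
  rw [gg]
  push_cast
  ring
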